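/- In an (n, ℓ, r, t) secret sharing scheme with uniform secret, for any I ⊆ [n] with #I ≥ r and preprocessing functions allowing recovery of the secret, the communication overhead satisfies CO(I) = Σ_{i∈I} H(E(x_i)) − ℓ ≥ ℓ·t / (#I − t). -/

import Mathlib

open Finset

/-- A probability mass function on a finite sample space. -/
structure FinPMF (Ω : Type*) [Fintype Ω] where
  p : Ω → ℝ
  nonneg : ∀ ω, 0 ≤ p ω
  sum_one : ∑ ω, p ω = 1

/-- Probability of an event. -/
noncomputable def prob {Ω : Type*} [Fintype Ω] (μ : FinPMF Ω) (E : Set Ω) : ℝ :=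
  ∑ ω, E.indicator μ.p ω

/-- Shannon entropy (base `b`) of a random variable `X` on `(Ω, μ)`. -/
noncomputable def entropy {Ω A : Type*} [Fintype Ω] [Fintype A] (b : ℝ) (μ : FinPMF Ω)
    (X : Ω → A) : ℝ :=
  -∑ a, prob μ {ω | X ω = a} * Real.logb b (prob μ {ω | X ω = a})

/-- Conditional entropy `H(X | Y) = H(X, Y) − H(Y)`. -/
noncomputable def condEntropy {Ω A B : Type*} [Fintype Ω] [Fintype A] [Fintype B] (b : ℝ)
    (μ : FinPMF Ω) (X : Ω → A) (Y : Ω → B) : ℝ :=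
  entropy b μ (fun ω => (X ω, Y ω)) - entropy b μ Y

/-- Mutual information `I(X ; Y) = H(X) − H(X | Y)`. -/
noncomputable def mutualInfo {Ω A B : Type*} [Fintype Ω] [Fintype A] [Fintype B] (b : ℝ)
    (μ : FinPMF Ω) (X : Ω → A) (Y : Ω → B) : ℝ :=
  entropy b μ X - condEntropy b μ X Y

open Finset

section Base
variable {Ω : Type*} [Fintype Ω] (μ : FinPMF Ω)

noncomputable def dst {A : Type*} [Fintype A] (X : Ω → A) (a : A) : ℝ :=
  prob μ {ω | X ω = a}

variable {A B C : Type*} [Fintype A] [Fintype B] [Fintype C]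

lemma dst_nonneg (X : Ω → A) (a : A) : 0 ≤ dst μ X a := by
  unfold dst prob
  exact Finset.sum_nonneg fun ω _ => Set.indicator_nonneg (fun ω _ => μ.nonneg ω) ω

lemma sum_dst_mul (X : Ω → A) (f : A → ℝ) :
    ∑ a, dst μ X a * f a = ∑ ω, μ.p ω * f (X ω) := by
  classical
  unfold dst prob
  simp only [Finset.sum_mul]
  rw [Finset.sum_comm]
  refine Finset.sum_congr rfl fun ω _ => ?_
  rw [Finset.sum_eq_single (X ω)]
  · simp [Set.indicator_apply]
  · intro a _ ha
    simp [Set.indicator_apply, Ne.symm ha]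
  · simp

lemma sum_dst (X : Ω → A) : ∑ a, dst μ X a = 1 := by
  have := sum_dst_mul μ X (fun _ => 1)
  simpa [μ.sum_one] using this

lemma dst_expect (φ : A → B) (X : Ω → A) (f : B → ℝ) :
    ∑ a, dst μ X a * f (φ a) = ∑ b, dst μ (fun ω => φ (X ω)) b * f b := by
  rw [sum_dst_mul, sum_dst_mul]

lemma dst_comp_le (φ : A → B) (X : Ω → A) (a : A) :
    dst μ X a ≤ dst μ (fun ω => φ (X ω)) (φ a) := by
  unfold dst prob
  refine Finset.sum_le_sum fun ω _ => ?_
  refine Set.indicator_le_indicator_of_subset ?_ (fun ω => μ.nonneg ω) ω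
  intro ω h
  simp only [Set.mem_setOf_eq] at h ⊢
  rw [h]

lemma dst_comp (φ : A → B) (X : Ω → A) (b : B) [DecidableEq B] :
    dst μ (fun ω => φ (X ω)) b = ∑ a, if φ a = b then dst μ X a else 0 := by
  classical
  unfold dst prob
  have h : ∀ a : A, (if φ a = b then ∑ ω, ({ω | X ω = a} : Set Ω).indicator μ.p ω else 0)
      = ∑ ω, (if φ a = b then ({ω | X ω = a} : Set Ω).indicator μ.p ω else 0) := by
    intro a; split <;> simp
  rw [Finset.sum_congr rfl fun a _ => h a, Finset.sum_comm]
  refine Finset.sum_congr rfl fun ω _ => ?_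
  rw [Finset.sum_eq_single (X ω)]
  · simp [Set.indicator_apply]
  · intro a _ ha
    simp [Set.indicator_apply, Ne.symm ha]
  · simp

lemma dst_le_one (X : Ω → A) (a : A) : dst μ X a ≤ 1 := by
  classical
  rw [← sum_dst μ X]
  exact Finset.single_le_sum (fun a _ => dst_nonneg μ X a) (Finset.mem_univ a)

noncomputable def nent {A : Type*} [Fintype A] (X : Ω → A) : ℝ :=
  -∑ a, dst μ X a * Real.log (dst μ X a)

lemma entropy_eq_nent (b : ℝ) (X : Ω → A) :
    entropy b μ X = nent μ X / Real.log b := by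
  unfold entropy nent dst
  rw [neg_div, Finset.sum_div]
  congr 1
  refine Finset.sum_congr rfl fun a _ => ?_
  rw [Real.logb, mul_div_assoc]

lemma nent_nonneg (X : Ω → A) : 0 ≤ nent μ X := by
  unfold nent
  rw [← Finset.sum_neg_distrib]
  refine Finset.sum_nonneg fun a _ => ?_
  rw [neg_nonneg]
  exact mul_nonpos_of_nonneg_of_nonpos (dst_nonneg μ X a)
    (Real.log_nonpos (dst_nonneg μ X a) (dst_le_one μ X a))

lemma nent_comp_inj (φ : A → B) (hφ : Function.Injective φ) (X : Ω → A) :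
    nent μ (fun ω => φ (X ω)) = nent μ X := by
  have hd : ∀ a, dst μ (fun ω => φ (X ω)) (φ a) = dst μ X a := by
    intro a
    unfold dst
    congr 1
    ext ω
    simp [hφ.eq_iff]
  unfold nent
  rw [← dst_expect μ φ X (fun b => Real.log (dst μ (fun ω => φ (X ω)) b))]
  congr 1
  refine Finset.sum_congr rfl fun a _ => ?_
  rw [hd]

lemma nent_subsingleton [Subsingleton A] (X : Ω → A) : nent μ X = 0 := by
  rcases isEmpty_or_nonempty A with h | h
  · simp [nent]
  · have : Unique A := uniqueOfSubsingleton (Classical.arbitrary A)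
    have hd : dst μ X default = 1 := by
      unfold dst
      have : {ω | X ω = default} = Set.univ := by
        ext ω; simp [Subsingleton.elim (X ω) default]
      rw [this]
      unfold prob
      simp [Set.indicator_univ, μ.sum_one]
    unfold nent
    rw [Fintype.sum_unique]
    simp [hd]


lemma gibbs {ι : Type*} [Fintype ι] (p q : ι → ℝ) (hp : ∀ i, 0 ≤ p i)
    (hq : ∀ i, 0 ≤ q i) (hsum : ∑ i, q i ≤ ∑ i, p i)
    (hsupp : ∀ i, 0 < p i → 0 < q i) :
    ∑ i, p i * Real.log (q i) ≤ ∑ i, p i * Real.log (p i) := by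
  have key : ∀ i, p i * Real.log (q i) - p i * Real.log (p i) ≤ q i - p i := by
    intro i
    rcases eq_or_lt_of_le (hp i) with h | h
    · simp [← h, hq i]
    · have hqi := hsupp i h
      have hlog : Real.log (q i / p i) ≤ q i / p i - 1 :=
        Real.log_le_sub_one_of_pos (div_pos hqi h)
      have h1 : p i * Real.log (q i / p i) ≤ p i * (q i / p i - 1) :=
        mul_le_mul_of_nonneg_left hlog (le_of_lt h)
      rw [Real.log_div (ne_of_gt hqi) (ne_of_gt h)] at h1
      have h2 : p i * (q i / p i - 1) = q i - p i := by
        field_simp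
      rw [h2] at h1
      linarith [h1]
  have hs : ∑ i, (p i * Real.log (q i) - p i * Real.log (p i)) ≤ ∑ i, (q i - p i) :=
    Finset.sum_le_sum fun i _ => key i
  rw [Finset.sum_sub_distrib, Finset.sum_sub_distrib] at hs
  linarith

lemma nent_snd_le (X : Ω → A) (Y : Ω → B) :
    nent μ Y ≤ nent μ (fun ω => (X ω, Y ω)) := by
  classical
  have h1 : ∑ b, dst μ Y b * Real.log (dst μ Y b)
      = ∑ c : A × B, dst μ (fun ω => (X ω, Y ω)) c * Real.log (dst μ Y c.2) := by
    have := dst_expect μ (Prod.snd : A × B → B) (fun ω => (X ω, Y ω))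
      (fun b => Real.log (dst μ Y b))
    exact this.symm
  unfold nent
  rw [h1, neg_le_neg_iff]
  refine Finset.sum_le_sum fun c _ => ?_
  rcases eq_or_lt_of_le (dst_nonneg μ (fun ω => (X ω, Y ω)) c) with h | h
  · rw [← h]; simp
  · have hle : dst μ (fun ω => (X ω, Y ω)) c ≤ dst μ Y c.2 := by
      have := dst_comp_le μ (Prod.snd : A × B → B) (fun ω => (X ω, Y ω)) c
      exact this
    exact mul_le_mul_of_nonneg_left (Real.log_le_log h hle) (le_of_lt h)

lemma nent_subadd (X : Ω → A) (Y : Ω → B) :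
    nent μ (fun ω => (X ω, Y ω)) ≤ nent μ X + nent μ Y := by
  classical
  set p : A × B → ℝ := dst μ (fun ω => (X ω, Y ω)) with hpdef
  set q : A × B → ℝ := fun c => dst μ X c.1 * dst μ Y c.2 with hqdef
  have hXle : ∀ c : A × B, p c ≤ dst μ X c.1 := fun c =>
    dst_comp_le μ (Prod.fst : A × B → A) (fun ω => (X ω, Y ω)) c
  have hYle : ∀ c : A × B, p c ≤ dst μ Y c.2 := fun c =>
    dst_comp_le μ (Prod.snd : A × B → B) (fun ω => (X ω, Y ω)) c
  have hgibbs : ∑ c, p c * Real.log (q c) ≤ ∑ c, p c * Real.log (p c) := by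
    refine gibbs p q (fun c => dst_nonneg _ _ _)
      (fun c => mul_nonneg (dst_nonneg _ _ _) (dst_nonneg _ _ _)) ?_ ?_
    · rw [sum_dst μ (fun ω => (X ω, Y ω))]
      rw [Fintype.sum_prod_type]
      simp only [hqdef]
      rw [← Finset.sum_mul_sum, sum_dst, sum_dst, one_mul]
    · intro c hc
      exact mul_pos (lt_of_lt_of_le hc (hXle c)) (lt_of_lt_of_le hc (hYle c))
  have hsplit : ∑ c, p c * Real.log (q c)
      = ∑ c : A × B, p c * Real.log (dst μ X c.1)
        + ∑ c : A × B, p c * Real.log (dst μ Y c.2) := by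
    rw [← Finset.sum_add_distrib]
    refine Finset.sum_congr rfl fun c _ => ?_
    rcases eq_or_lt_of_le (dst_nonneg μ (fun ω => (X ω, Y ω)) c) with h | h
    · have h0 : p c = 0 := h.symm
      rw [h0]; simp
    · have h1 : 0 < dst μ X c.1 := lt_of_lt_of_le h (hXle c)
      have h2 : 0 < dst μ Y c.2 := lt_of_lt_of_le h (hYle c)
      rw [hqdef]
      simp only []
      rw [Real.log_mul (ne_of_gt h1) (ne_of_gt h2)]
      ring
  have hm1 : ∑ c : A × B, p c * Real.log (dst μ X c.1)
      = ∑ a, dst μ X a * Real.log (dst μ X a) := by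
    have := dst_expect μ (Prod.fst : A × B → A) (fun ω => (X ω, Y ω))
      (fun a => Real.log (dst μ X a))
    exact this
  have hm2 : ∑ c : A × B, p c * Real.log (dst μ Y c.2)
      = ∑ b, dst μ Y b * Real.log (dst μ Y b) := by
    have := dst_expect μ (Prod.snd : A × B → B) (fun ω => (X ω, Y ω))
      (fun b => Real.log (dst μ Y b))
    exact this
  unfold nent
  have := hgibbs
  rw [hsplit, hm1, hm2] at this
  linarith



lemma dst_marg_snd (X : Ω → A) (Z : Ω → C) (z : C) :
    ∑ x, dst μ (fun ω => (X ω, Z ω)) (x, z) = dst μ Z z := by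
  classical
  have h := dst_comp μ (Prod.snd : A × C → C) (fun ω => (X ω, Z ω)) z
  have h2 : ∑ x, dst μ (fun ω => (X ω, Z ω)) (x, z)
      = ∑ c : A × C, if c.2 = z then dst μ (fun ω => (X ω, Z ω)) c else 0 := by
    rw [Fintype.sum_prod_type]
    refine Finset.sum_congr rfl fun x _ => ?_
    rw [Finset.sum_ite_eq' Finset.univ z (fun y => dst μ (fun ω => (X ω, Z ω)) (x, y))]
    simp
  exact h2.trans h.symm

lemma nent_dp (X : Ω → A) (Y : Ω → B) (g : B → C) :
    nent μ (fun ω => (X ω, Y ω)) - nent μ Y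
      ≤ nent μ (fun ω => (X ω, g (Y ω))) - nent μ (fun ω => g (Y ω)) := by
  classical
  set p : A × B → ℝ := dst μ (fun ω => (X ω, Y ω)) with hpdef
  set pY : B → ℝ := dst μ Y with hpYdef
  set pXZ : A × C → ℝ := dst μ (fun ω => (X ω, g (Y ω))) with hpXZdef
  set pZ : C → ℝ := dst μ (fun ω => g (Y ω)) with hpZdef
  set q : A × B → ℝ := fun c => pY c.2 * (pXZ (c.1, g c.2) / pZ (g c.2)) with hqdef
  have hYle : ∀ c : A × B, p c ≤ pY c.2 := fun c =>
    dst_comp_le μ (Prod.snd : A × B → B) (fun ω => (X ω, Y ω)) c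
  have hXZle : ∀ c : A × B, p c ≤ pXZ (c.1, g c.2) := fun c =>
    dst_comp_le μ (fun d : A × B => (d.1, g d.2)) (fun ω => (X ω, Y ω)) c
  have hZle : ∀ c : A × B, p c ≤ pZ (g c.2) := fun c =>
    dst_comp_le μ (fun d : A × B => g d.2) (fun ω => (X ω, Y ω)) c
  have hmargZ : ∀ z : C, ∑ x, pXZ (x, z) = pZ z := fun z =>
    dst_marg_snd μ X (fun ω => g (Y ω)) z
  have hgibbs : ∑ c, p c * Real.log (q c) ≤ ∑ c, p c * Real.log (p c) := by
    refine gibbs p q (fun c => dst_nonneg _ _ _) ?_ ?_ ?_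
    · intro c
      exact mul_nonneg (dst_nonneg _ _ _)
        (div_nonneg (dst_nonneg _ _ _) (dst_nonneg _ _ _))
    · rw [show (∑ c, p c) = 1 from sum_dst μ (fun ω => (X ω, Y ω))]
      rw [Fintype.sum_prod_type, Finset.sum_comm]
      have h1 : ∀ y : B, ∑ x : A, q (x, y) ≤ pY y := by
        intro y
        have h2 : ∑ x : A, q (x, y) = pY y * ((∑ x, pXZ (x, g y)) / pZ (g y)) := by
          simp only [hqdef]
          rw [← Finset.mul_sum, ← Finset.sum_div]
        rw [h2, hmargZ (g y)]
        by_cases hz : pZ (g y) = 0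
        · simp only [hz, div_zero, mul_zero]
          exact dst_nonneg μ Y y
        · rw [div_self hz, mul_one]
      calc ∑ y : B, ∑ x : A, q (x, y) ≤ ∑ y : B, pY y :=
            Finset.sum_le_sum fun y _ => h1 y
        _ = 1 := sum_dst μ Y
    · intro c hc
      exact mul_pos (lt_of_lt_of_le hc (hYle c))
        (div_pos (lt_of_lt_of_le hc (hXZle c)) (lt_of_lt_of_le hc (hZle c)))
  have hsplit : ∑ c, p c * Real.log (q c)
      = ∑ c : A × B, p c * Real.log (pY c.2)
        + ∑ c : A × B, p c * Real.log (pXZ (c.1, g c.2))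
        - ∑ c : A × B, p c * Real.log (pZ (g c.2)) := by
    rw [← Finset.sum_add_distrib, ← Finset.sum_sub_distrib]
    refine Finset.sum_congr rfl fun c _ => ?_
    rcases eq_or_lt_of_le (dst_nonneg μ (fun ω => (X ω, Y ω)) c) with h | h
    · have h0 : p c = 0 := h.symm
      rw [h0]; ring
    · have h1 := lt_of_lt_of_le h (hYle c)
      have h2 := lt_of_lt_of_le h (hXZle c)
      have h3 := lt_of_lt_of_le h (hZle c)
      have hq : q c = pY c.2 * (pXZ (c.1, g c.2) / pZ (g c.2)) := rfl
      rw [hq, Real.log_mul (ne_of_gt h1) (ne_of_gt (div_pos h2 h3)),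
        Real.log_div (ne_of_gt h2) (ne_of_gt h3)]
      ring
  have hm1 : ∑ c : A × B, p c * Real.log (pY c.2) = ∑ b, pY b * Real.log (pY b) :=
    dst_expect μ (Prod.snd : A × B → B) (fun ω => (X ω, Y ω)) (fun b => Real.log (pY b))
  have hm2 : ∑ c : A × B, p c * Real.log (pXZ (c.1, g c.2))
      = ∑ d : A × C, pXZ d * Real.log (pXZ d) :=
    dst_expect μ (fun d : A × B => (d.1, g d.2)) (fun ω => (X ω, Y ω))
      (fun d => Real.log (pXZ d))
  have hm3 : ∑ c : A × B, p c * Real.log (pZ (g c.2)) = ∑ z, pZ z * Real.log (pZ z) :=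
    dst_expect μ (fun d : A × B => g d.2) (fun ω => (X ω, Y ω)) (fun z => Real.log (pZ z))
  have hfin := hgibbs
  rw [hsplit, hm1, hm2, hm3] at hfin
  unfold nent
  linarith [hfin]


lemma nent_pi_le {ι : Type*} [DecidableEq ι] (γ : ι → Type*) [∀ i, Fintype (γ i)]
    (Y : ∀ i, Ω → γ i) (s : Finset ι) :
    nent μ (fun ω => fun i : {x // x ∈ s} => Y i.1 ω) ≤ ∑ i ∈ s, nent μ (Y i) := by
  classical
  induction s using Finset.induction_on with
  | empty =>
    have hie : IsEmpty {x // x ∈ (∅ : Finset ι)} := ⟨fun x => absurd x.2 (Finset.notMem_empty x.1)⟩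
    have hsub : Subsingleton (∀ i : {x // x ∈ (∅ : Finset ι)}, γ i.1) :=
      ⟨fun u v => funext fun i => (hie.false i).elim⟩
    rw [nent_subsingleton]
    simp
  | @insert a s ha ih =>
    have hφinj : Function.Injective
        (fun v : (∀ i : {x // x ∈ insert a s}, γ i.1) =>
          (v ⟨a, Finset.mem_insert_self a s⟩,
            fun i : {x // x ∈ s} => v ⟨i.1, Finset.mem_insert_of_mem i.2⟩)) := by
      intro u v h
      have h1 : u ⟨a, Finset.mem_insert_self a s⟩ = v ⟨a, Finset.mem_insert_self a s⟩ :=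
        congrArg Prod.fst h
      have h2 : ∀ i : {x // x ∈ s},
          u ⟨i.1, Finset.mem_insert_of_mem i.2⟩ = v ⟨i.1, Finset.mem_insert_of_mem i.2⟩ :=
        fun i => congrFun (congrArg Prod.snd h) i
      funext i
      rcases Finset.mem_insert.1 i.2 with h3 | h3
      · have : i = ⟨a, Finset.mem_insert_self a s⟩ := Subtype.ext h3
        rw [this]; exact h1
      · exact h2 ⟨i.1, h3⟩
    have heq : nent μ (fun ω => fun i : {x // x ∈ insert a s} => Y i.1 ω)
        = nent μ (fun ω => (Y a ω, fun i : {x // x ∈ s} => Y i.1 ω)) :=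
      (nent_comp_inj μ _ hφinj (fun ω => fun i : {x // x ∈ insert a s} => Y i.1 ω)).symm
    rw [heq, Finset.sum_insert ha]
    exact le_trans (nent_subadd μ _ _) (add_le_add (le_refl _) ih)

lemma count_mem_powersetCard {ι : Type*} [DecidableEq ι] (s : Finset ι) (t : ℕ) (i : ι)
    (hi : i ∈ s) (ht : 1 ≤ t) :
    ((s.powersetCard t).filter (fun T => i ∈ T)).card = (s.card - 1).choose (t - 1) := by
  rw [← Finset.card_erase_of_mem hi, ← Finset.card_powersetCard (t - 1) (s.erase i)]
  refine Finset.card_bij' (fun T _ => T.erase i) (fun T _ => insert i T) ?_ ?_ ?_ ?_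
  · intro T hT
    rw [Finset.mem_filter, Finset.mem_powersetCard] at hT
    rw [Finset.mem_powersetCard]
    exact ⟨Finset.erase_subset_erase i hT.1.1,
      by rw [Finset.card_erase_of_mem hT.2, hT.1.2]⟩
  · intro T hT
    rw [Finset.mem_powersetCard] at hT
    have hiT : i ∉ T := fun hmem => (Finset.mem_erase.1 (hT.1 hmem)).1 rfl
    rw [Finset.mem_filter, Finset.mem_powersetCard]
    refine ⟨⟨Finset.insert_subset hi (hT.1.trans (Finset.erase_subset i s)), ?_⟩,
      Finset.mem_insert_self i T⟩
    rw [Finset.card_insert_of_notMem hiT, hT.2, Nat.sub_add_cancel ht]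
  · intro T hT
    rw [Finset.mem_filter] at hT
    exact Finset.insert_erase hT.2
  · intro T hT
    rw [Finset.mem_powersetCard] at hT
    have hiT : i ∉ T := fun hmem => (Finset.mem_erase.1 (hT.1 hmem)).1 rfl
    exact Finset.erase_insert hiT

lemma exists_good_subset {ι : Type*} [Fintype ι] [DecidableEq ι] (h : ι → ℝ)
    (hh : ∀ i, 0 ≤ h i) (t : ℕ) (htm : t ≤ Fintype.card ι) :
    ∃ T : Finset ι, T.card = t ∧
      (t : ℝ) * ∑ i, h i ≤ (Fintype.card ι : ℝ) * ∑ i ∈ T, h i := by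
  classical
  rcases Nat.eq_zero_or_pos t with rfl | ht
  · exact ⟨∅, by simp, by simp⟩
  set m := Fintype.card ι with hm
  set P := (Finset.univ : Finset ι).powersetCard t with hP
  have hPcard : P.card = m.choose t := by
    rw [hP, Finset.card_powersetCard, Finset.card_univ]
  have hne : P.Nonempty := by
    rw [← Finset.card_pos, hPcard]
    exact Nat.choose_pos htm
  have hdouble : ∑ T ∈ P, ∑ i ∈ T, h i = ((m - 1).choose (t - 1) : ℝ) * ∑ i, h i := by
    have h1 : ∀ T ∈ P, ∑ i ∈ T, h i = ∑ i, if i ∈ T then h i else 0 := by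
      intro T hT
      rw [Finset.mem_powersetCard] at hT
      rw [Finset.sum_ite_mem, Finset.univ_inter]
    rw [Finset.sum_congr rfl h1, Finset.sum_comm]
    have h2 : ∀ i : ι, ∑ T ∈ P, (if i ∈ T then h i else 0)
        = ((m - 1).choose (t - 1) : ℝ) * h i := by
      intro i
      rw [Finset.sum_ite, Finset.sum_const_zero, add_zero, Finset.sum_const]
      rw [hP, count_mem_powersetCard Finset.univ t i (Finset.mem_univ i) ht,
        Finset.card_univ, ← hm, nsmul_eq_mul]
    rw [Finset.sum_congr rfl fun i _ => h2 i, ← Finset.mul_sum]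
  have hid : m * (m - 1).choose (t - 1) = t * m.choose t := by
    have hm1 : 1 ≤ m := le_trans ht htm
    have hs := Nat.add_one_mul_choose_eq (m - 1) (t - 1)
    have e1 : m - 1 + 1 = m := by omega
    have e2 : t - 1 + 1 = t := by omega
    rw [e1, e2] at hs
    rw [hs, mul_comm]
  have hsum : ∑ _T ∈ P, ((t : ℝ) * ∑ i, h i) ≤ ∑ T ∈ P, ((m : ℝ) * ∑ i ∈ T, h i) := by
    rw [Finset.sum_const, hPcard, ← Finset.mul_sum, hdouble, nsmul_eq_mul]
    have : (m.choose t : ℝ) * ((t : ℝ) * ∑ i, h i)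
        = (m : ℝ) * (((m - 1).choose (t - 1) : ℝ) * ∑ i, h i) := by
      rw [← mul_assoc, ← mul_assoc]
      congr 1
      have hnat : m.choose t * t = m * (m - 1).choose (t - 1) := by rw [hid]; ring
      exact_mod_cast hnat
    rw [this]
  obtain ⟨T, hTP, hle⟩ := Finset.exists_le_of_sum_le hne hsum
  rw [hP, Finset.mem_powersetCard] at hTP
  exact ⟨T, hTP.2, hle⟩

end Base

set_option maxHeartbeats 2000000 in
/-- In an `(n, ℓ, r, t)` secret sharing scheme with uniform secret,
for any `I` with `#I ≥ r` and preprocessing functions from which the secret is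
recoverable, the communication overhead satisfies
`Σ_{i∈I} H(E(x_i)) − ℓ ≥ ℓ·t / (#I − t)` (entropies with base `#𝒜`). -/
theorem communication_overhead_lower_bound
    {Ω A : Type*} [Fintype Ω] [Fintype A] (hA : 2 ≤ Fintype.card A)
    (n ℓ r t : ℕ) (hℓ : 1 ≤ ℓ) (hr : r ≤ n)
    (μ : FinPMF Ω) (S : Ω → Fin ℓ → A) (X : Ω → Fin n → A)
    (hunif : ∀ s : Fin ℓ → A, prob μ {ω | S ω = s} = (Fintype.card (Fin ℓ → A) : ℝ)⁻¹)
    (hrec : ∀ J : Finset (Fin n), r ≤ J.card →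
      condEntropy (Fintype.card A) μ S (fun ω (j : { i // i ∈ J }) => X ω j.1) = 0)
    (hpriv : ∀ J : Finset (Fin n), J.card ≤ t →
      condEntropy (Fintype.card A) μ S (fun ω (j : { i // i ∈ J }) => X ω j.1)
        = entropy (Fintype.card A) μ S)
    (I : Finset (Fin n)) (hI : r ≤ I.card) (htI : t < I.card)
    (B : { i // i ∈ I } → Type*) [∀ i, Fintype (B i)]
    (E : ∀ i : { i // i ∈ I }, A → B i)
    (hdec : condEntropy (Fintype.card A) μ S
      (fun ω (i : { i // i ∈ I }) => E i (X ω i.1)) = 0) :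
    (ℓ * t : ℝ) / (I.card - t)
      ≤ (∑ i : { i // i ∈ I }, entropy (Fintype.card A) μ (fun ω => E i (X ω i.1)))
          - ℓ := by
  classical
  have hb : (1 : ℝ) < (Fintype.card A : ℝ) := by exact_mod_cast lt_of_lt_of_le one_lt_two hA
  have hL : 0 < Real.log (Fintype.card A : ℝ) := Real.log_pos hb
  -- entropy of the uniform secret
  have hSnent : nent μ S = (ℓ : ℝ) * Real.log (Fintype.card A : ℝ) := by
    have hc : (Fintype.card (Fin ℓ → A) : ℝ) = (Fintype.card A : ℝ) ^ ℓ := by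
      rw [Fintype.card_fun, Fintype.card_fin]
      push_cast
      ring
    have hd : ∀ s, dst μ S s = (Fintype.card (Fin ℓ → A) : ℝ)⁻¹ := fun s => hunif s
    unfold nent
    rw [Finset.sum_congr rfl fun s (_ : s ∈ Finset.univ) => by rw [hd s]]
    rw [Finset.sum_const, Finset.card_univ, nsmul_eq_mul, hc]
    have hbpos : (0 : ℝ) < (Fintype.card A : ℝ) := lt_trans one_pos hb
    have hbp : (0 : ℝ) < (Fintype.card A : ℝ) ^ ℓ := pow_pos hbpos ℓ
    rw [Real.log_inv, Real.log_pow]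
    field_simp
  -- the function g
  set g : { i // i ∈ I } → ℝ := fun i => nent μ (fun ω => E i (X ω i.1)) with hgdef
  have hgnn : ∀ i, 0 ≤ g i := fun i => nent_nonneg μ _
  obtain ⟨T, hTcard, hTineq⟩ := exists_good_subset g hgnn t
    (by rw [Fintype.card_coe]; exact le_of_lt htI)
  rw [Fintype.card_coe] at hTineq
  -- privacy
  set J : Finset (Fin n) := T.image Subtype.val with hJdef
  have hJcard : J.card = t := by
    rw [hJdef, Finset.card_image_of_injective _ Subtype.val_injective, hTcard]
  have hpr := hpriv J hJcard.le
  rw [condEntropy, entropy_eq_nent, entropy_eq_nent, entropy_eq_nent, hSnent] at hpr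
  have hXJ : nent μ (fun ω => (S ω, fun j : { i // i ∈ J } => X ω j.1))
      - nent μ (fun ω => fun j : { i // i ∈ J } => X ω j.1)
      = (ℓ : ℝ) * Real.log (Fintype.card A : ℝ) := by
    have hLne : Real.log (Fintype.card A : ℝ) ≠ 0 := ne_of_gt hL
    field_simp at hpr
    linarith [hpr]
  -- data processing to E on T
  have hdp := nent_dp μ S (fun ω (j : { i // i ∈ J }) => X ω j.1)
    (fun (v : { i // i ∈ J } → A) (i : { x // x ∈ T }) =>
      E i.1 (v ⟨i.1.1, Finset.mem_image.2 ⟨i.1, i.2, rfl⟩⟩))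
  have hdp' : (ℓ : ℝ) * Real.log (Fintype.card A : ℝ)
      ≤ nent μ (fun ω => (S ω, fun i : { x // x ∈ T } => E i.1 (X ω i.1.1)))
        - nent μ (fun ω => fun i : { x // x ∈ T } => E i.1 (X ω i.1.1)) :=
    le_trans (le_of_eq hXJ.symm) hdp
  -- recovery
  have hdec' := hdec
  rw [condEntropy, entropy_eq_nent, entropy_eq_nent, div_sub_div_same,
    div_eq_zero_iff] at hdec'
  have hrec0 : nent μ (fun ω => (S ω, fun i : { i // i ∈ I } => E i (X ω i.1)))
      = nent μ (fun ω => fun i : { i // i ∈ I } => E i (X ω i.1)) := by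
    rcases hdec' with h | h
    · exact sub_eq_zero.1 h
    · exact absurd h (ne_of_gt hL)
  -- splitting
  have hφinj : Function.Injective
      (fun v : (∀ i : { i // i ∈ I }, B i) =>
        ((fun i : { x // x ∈ T } => v i.1), (fun i : { x // x ∈ Tᶜ } => v i.1))) := by
    intro u v h
    simp only [Prod.mk.injEq] at h
    funext i
    by_cases hiT : i ∈ T
    · exact congrFun h.1 ⟨i, hiT⟩
    · exact congrFun h.2 ⟨i, Finset.mem_compl.2 hiT⟩
  have hφ2inj : Function.Injective
      (fun p : (Fin ℓ → A) × (∀ i : { i // i ∈ I }, B i) =>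
        (p.1, ((fun i : { x // x ∈ T } => p.2 i.1), (fun i : { x // x ∈ Tᶜ } => p.2 i.1)))) := by
    intro u v h
    simp only [Prod.mk.injEq] at h
    refine Prod.ext h.1 (funext fun i => ?_)
    by_cases hiT : i ∈ T
    · exact congrFun h.2.1 ⟨i, hiT⟩
    · exact congrFun h.2.2 ⟨i, Finset.mem_compl.2 hiT⟩
  have hSW : nent μ (fun ω => (S ω, ((fun i : { x // x ∈ T } => E i.1 (X ω i.1.1)),
        (fun i : { x // x ∈ Tᶜ } => E i.1 (X ω i.1.1)))))
      = nent μ (fun ω => ((fun i : { x // x ∈ T } => E i.1 (X ω i.1.1)),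
        (fun i : { x // x ∈ Tᶜ } => E i.1 (X ω i.1.1)))) := by
    have e1 : nent μ (fun ω => (S ω, ((fun i : { x // x ∈ T } => E i.1 (X ω i.1.1)),
        (fun i : { x // x ∈ Tᶜ } => E i.1 (X ω i.1.1)))))
        = nent μ (fun ω => (S ω, fun i : { i // i ∈ I } => E i (X ω i.1))) :=
      nent_comp_inj μ _ hφ2inj (fun ω => (S ω, fun i : { i // i ∈ I } => E i (X ω i.1)))
    have e2 : nent μ (fun ω => ((fun i : { x // x ∈ T } => E i.1 (X ω i.1.1)),
        (fun i : { x // x ∈ Tᶜ } => E i.1 (X ω i.1.1))))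
        = nent μ (fun ω => fun i : { i // i ∈ I } => E i (X ω i.1)) :=
      nent_comp_inj μ _ hφinj (fun ω => fun i : { i // i ∈ I } => E i (X ω i.1))
    rw [e1, hrec0, ← e2]
  -- monotone step
  have hψinj : Function.Injective
      (fun p : (Fin ℓ → A) × ((∀ i : { x // x ∈ T }, B i.1) × (∀ i : { x // x ∈ Tᶜ }, B i.1)) =>
        (p.2.2, (p.1, p.2.1))) := by
    intro u v h
    simp only [Prod.mk.injEq] at h
    exact Prod.ext h.2.1 (Prod.ext h.2.2 h.1)
  have hm1 : nent μ (fun ω => (S ω, fun i : { x // x ∈ T } => E i.1 (X ω i.1.1)))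
      ≤ nent μ (fun ω => ((fun i : { x // x ∈ Tᶜ } => E i.1 (X ω i.1.1)),
          (S ω, fun i : { x // x ∈ T } => E i.1 (X ω i.1.1)))) :=
    nent_snd_le μ (fun ω => fun i : { x // x ∈ Tᶜ } => E i.1 (X ω i.1.1))
      (fun ω => (S ω, fun i : { x // x ∈ T } => E i.1 (X ω i.1.1)))
  have hm2 : nent μ (fun ω => ((fun i : { x // x ∈ Tᶜ } => E i.1 (X ω i.1.1)),
        (S ω, fun i : { x // x ∈ T } => E i.1 (X ω i.1.1))))
      = nent μ (fun ω => (S ω, ((fun i : { x // x ∈ T } => E i.1 (X ω i.1.1)),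
        (fun i : { x // x ∈ Tᶜ } => E i.1 (X ω i.1.1))))) :=
    nent_comp_inj μ _ hψinj (fun ω => (S ω, ((fun i : { x // x ∈ T } => E i.1 (X ω i.1.1)),
        (fun i : { x // x ∈ Tᶜ } => E i.1 (X ω i.1.1)))))
  have hsub := nent_subadd μ (fun ω => fun i : { x // x ∈ T } => E i.1 (X ω i.1.1))
    (fun ω => fun i : { x // x ∈ Tᶜ } => E i.1 (X ω i.1.1))
  have hpi : nent μ (fun ω => fun i : { x // x ∈ Tᶜ } => E i.1 (X ω i.1.1))
      ≤ ∑ i ∈ Tᶜ, g i :=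
    nent_pi_le μ B (fun i ω => E i (X ω i.1)) Tᶜ
  have hKey : (ℓ : ℝ) * Real.log (Fintype.card A : ℝ) ≤ ∑ i ∈ Tᶜ, g i := by
    have h1 := hdp'
    have h2 := hm1
    have h3 := hm2
    have h4 := hSW
    have h5 := hsub
    have h6 := hpi
    linarith
  -- final arithmetic
  have hsumc : ∑ i ∈ T, g i + ∑ i ∈ Tᶜ, g i = ∑ i, g i := Finset.sum_add_sum_compl T g
  have hgoalsum : ∀ i : { i // i ∈ I }, entropy (Fintype.card A) μ (fun ω => E i (X ω i.1))
      = g i / Real.log (Fintype.card A : ℝ) := fun i => entropy_eq_nent μ _ _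
  rw [Finset.sum_congr rfl fun i _ => hgoalsum i, ← Finset.sum_div]
  set N : ℝ := ∑ i, g i with hNdef
  have hmt : (0 : ℝ) < (I.card : ℝ) - (t : ℝ) := by
    have : (t : ℝ) < (I.card : ℝ) := by exact_mod_cast htI
    linarith
  rw [div_le_iff₀ hmt]
  have hNnn : 0 ≤ N := Finset.sum_nonneg fun i _ => hgnn i
  have hTnn : 0 ≤ ∑ i ∈ T, g i := Finset.sum_nonneg fun i _ => hgnn i
  have hcard_nn : (0 : ℝ) ≤ (I.card : ℝ) := Nat.cast_nonneg _
  -- ℓ L I.card ≤ (I.card - t) * N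
  have hstep : (ℓ : ℝ) * Real.log (Fintype.card A : ℝ) * (I.card : ℝ)
      ≤ ((I.card : ℝ) - (t : ℝ)) * N := by
    have h1 : (ℓ : ℝ) * Real.log (Fintype.card A : ℝ) ≤ N - ∑ i ∈ T, g i := by
      have := hKey
      linarith [hsumc]
    nlinarith [hTineq, hcard_nn]
  have hNL : N = N / Real.log (Fintype.card A : ℝ) * Real.log (Fintype.card A : ℝ) :=
    (div_mul_cancel₀ N (ne_of_gt hL)).symm
  set Sg : ℝ := N / Real.log (Fintype.card A : ℝ) with hSgdef
  have hstep2 : (ℓ : ℝ) * (I.card : ℝ) ≤ ((I.card : ℝ) - (t : ℝ)) * Sg := by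
    have h2 : (ℓ : ℝ) * Real.log (Fintype.card A : ℝ) * (I.card : ℝ)
        ≤ ((I.card : ℝ) - (t : ℝ)) * Sg * Real.log (Fintype.card A : ℝ) := by
      calc (ℓ : ℝ) * Real.log (Fintype.card A : ℝ) * (I.card : ℝ)
          ≤ ((I.card : ℝ) - (t : ℝ)) * N := hstep
        _ = ((I.card : ℝ) - (t : ℝ)) * Sg * Real.log (Fintype.card A : ℝ) := by
            rw [hNL]; ring
    have := (mul_le_mul_iff_of_pos_right hL).1 (by
      calc (ℓ : ℝ) * (I.card : ℝ) * Real.log (Fintype.card A : ℝ)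
          = (ℓ : ℝ) * Real.log (Fintype.card A : ℝ) * (I.card : ℝ) := by ring
        _ ≤ ((I.card : ℝ) - (t : ℝ)) * Sg * Real.log (Fintype.card A : ℝ) := h2)
    exact this
  nlinarith [hstep2, hmt]
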